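/- Every element of a closed convex cone in a finite-dimensional real vector space that is pointed (K ∩ −K = {0}) is a finite nonnegative linear combination of elements lying on extreme rays of K. -/

import Mathlib

/-- The ray generated by `y`: all nonnegative multiples of `y`. -/
def RayOf {V : Type*} [AddCommGroup V] [Module ℝ V] (y : V) : Set V :=
  {x | ∃ t : ℝ, 0 ≤ t ∧ x = t • y}

/-- `y` generates an extreme ray of the cone `K`: `y ∈ K` and no element of the ray of
`y` is a sum of two elements of `K` outside that ray. -/
def GeneratesExtremeRay {V : Type*} [AddCommGroup V] [Module ℝ V]
    (K : Set V) (y : V) : Prop :=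
  y ∈ K ∧ ∀ x ∈ RayOf y, ∀ a ∈ K, ∀ b ∈ K, x = a + b → a ∈ RayOf y ∧ b ∈ RayOf y

section Helpers

open Set Filter Topology

variable {V : Type*} [NormedAddCommGroup V] [NormedSpace ℝ V] [FiniteDimensional ℝ V]

set_option linter.unusedSectionVars false
set_option linter.unusedVariables false

-- extreme generators of a face are extreme generators of K
lemma face_extreme {K : Set V} (hsmul : ∀ c : ℝ, 0 ≤ c → ∀ x ∈ K, c • x ∈ K)
    (g : V →L[ℝ] ℝ) (hg : ∀ y ∈ K, 0 ≤ g y) (y : V)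
    (hy : GeneratesExtremeRay {a | a ∈ K ∧ g a = 0} y) :
    GeneratesExtremeRay K y := by
  obtain ⟨⟨hyK, hyg⟩, hext⟩ := hy
  refine ⟨hyK, ?_⟩
  rintro x ⟨t, ht, rfl⟩ a ha b hb hab
  have hxK : t • y ∈ K := hsmul t ht y hyK
  have hxg : g (t • y) = 0 := by rw [map_smul, hyg, smul_zero]
  have hga : g a = 0 ∧ g b = 0 := by
    have := hxg
    rw [hab, map_add] at this
    constructor <;> linarith [hg a ha, hg b hb]
  exact hext (t • y) ⟨t, ht, rfl⟩ a ⟨ha, hga.1⟩ b ⟨hb, hga.2⟩ hab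

-- combining two decompositions
lemma combine_decomp {K : Set V} {x x₁ x₂ : V} {s₁ s₂ : ℝ}
    (hs₁ : 0 ≤ s₁) (hs₂ : 0 ≤ s₂) (hx : x = s₁ • x₁ + s₂ • x₂)
    (h₁ : ∃ (k : ℕ) (c : Fin k → ℝ) (y : Fin k → V),
      (∀ i, 0 ≤ c i) ∧ (∀ i, GeneratesExtremeRay K (y i)) ∧ x₁ = ∑ i, c i • y i)
    (h₂ : ∃ (k : ℕ) (c : Fin k → ℝ) (y : Fin k → V),
      (∀ i, 0 ≤ c i) ∧ (∀ i, GeneratesExtremeRay K (y i)) ∧ x₂ = ∑ i, c i • y i) :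
    ∃ (k : ℕ) (c : Fin k → ℝ) (y : Fin k → V),
      (∀ i, 0 ≤ c i) ∧ (∀ i, GeneratesExtremeRay K (y i)) ∧ x = ∑ i, c i • y i := by
  obtain ⟨k₁, c₁, y₁, hc₁, hy₁, he₁⟩ := h₁
  obtain ⟨k₂, c₂, y₂, hc₂, hy₂, he₂⟩ := h₂
  refine ⟨k₁ + k₂, Fin.append (fun i => s₁ * c₁ i) (fun i => s₂ * c₂ i),
    Fin.append y₁ y₂, ?_, ?_, ?_⟩
  · intro i
    rcases Nat.lt_or_ge i.1 k₁ with h | h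
    · have : i = Fin.castAdd k₂ ⟨i.1, h⟩ := by ext; rfl
      rw [this, Fin.append_left]
      exact mul_nonneg hs₁ (hc₁ _)
    · have : i = Fin.natAdd k₁ ⟨i.1 - k₁, by omega⟩ := by ext; simp; omega
      rw [this, Fin.append_right]
      exact mul_nonneg hs₂ (hc₂ _)
  · intro i
    rcases Nat.lt_or_ge i.1 k₁ with h | h
    · have : i = Fin.castAdd k₂ ⟨i.1, h⟩ := by ext; rfl
      rw [this, Fin.append_left]; exact hy₁ _
    · have : i = Fin.natAdd k₁ ⟨i.1 - k₁, by omega⟩ := by ext; simp; omega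
      rw [this, Fin.append_right]; exact hy₂ _
  · rw [hx, he₁, he₂, Fin.sum_univ_add]
    simp only [Fin.append_left, Fin.append_right, Finset.smul_sum, smul_smul]

-- direction not in K nor -K
lemma exists_two_sided_outside {K : Set V} (hclosed : IsClosed K)
    (hsmul : ∀ c : ℝ, 0 ≤ c → ∀ x ∈ K, c • x ∈ K)
    (hpointed : ∀ x, x ∈ K → -x ∈ K → x = 0)
    {x v : V} (hx : x ∈ K) (hv : v ∈ K) (hx0 : x ≠ 0)
    (hvx : v ∉ Submodule.span ℝ {x}) :
    ∃ w : V, w ∈ Submodule.span ℝ K ∧ w ∉ K ∧ -w ∉ K := by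
  classical
  by_contra hno
  push_neg at hno
  have hmem : ∀ w ∈ Submodule.span ℝ K, w ∉ K → -w ∈ K := hno
  have hv0 : v ≠ 0 := fun h => hvx (h ▸ Submodule.zero_mem _)
  let p : ℝ → V := fun t => (1 - t) • x - t • v
  have hpcont : Continuous p := by fun_prop
  have hpW : ∀ t, p t ∈ Submodule.span ℝ K := fun t =>
    Submodule.sub_mem _ (Submodule.smul_mem _ _ (Submodule.subset_span hx))
      (Submodule.smul_mem _ _ (Submodule.subset_span hv))
  have hall : ∀ t, p t ∈ K ∨ -(p t) ∈ K := fun t =>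
    (em (p t ∈ K)).imp id (fun h => hmem _ (hpW t) h)
  set B : Set ℝ := {t | t ∈ Icc (0:ℝ) 1 ∧ -(p t) ∈ K} with hB
  have hBc : IsClosed B :=
    IsClosed.inter isClosed_Icc (hclosed.preimage hpcont.neg)
  have hBne : B.Nonempty := by
    refine ⟨1, by simp, ?_⟩
    have : p 1 = -v := by simp [p]
    rw [this, neg_neg]
    exact hv
  have hBbdd : BddBelow B := ⟨0, fun t ht => ht.1.1⟩
  set t₀ : ℝ := sInf B with ht₀
  have ht₀B : t₀ ∈ B := hBc.csInf_mem hBne hBbdd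
  have ht₀0 : t₀ ≠ 0 := by
    intro h
    have h2 := ht₀B.2
    rw [h] at h2
    have : p 0 = x := by simp [p]
    rw [this] at h2
    exact hx0 (hpointed x hx h2)
  have ht₀pos : 0 < t₀ := lt_of_le_of_ne ht₀B.1.1 (Ne.symm ht₀0)
  have hKbelow : ∀ t ∈ Ico (0:ℝ) t₀, p t ∈ K := by
    intro t ht
    rcases hall t with h | h
    · exact h
    · exact absurd (csInf_le hBbdd ⟨⟨ht.1, le_trans ht.2.le ht₀B.1.2⟩, h⟩)
        (not_le.mpr ht.2)
  have hpt₀K : p t₀ ∈ K := by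
    have hseq : Tendsto (fun n : ℕ => p (t₀ - t₀/(n+2))) atTop (𝓝 (p t₀)) := by
      apply (hpcont.tendsto t₀).comp
      have h1 : Tendsto (fun n : ℕ => ((n:ℝ)+2)) atTop atTop :=
        tendsto_atTop_add_const_right _ 2 tendsto_natCast_atTop_atTop
      have h2 : Tendsto (fun n : ℕ => t₀/((n:ℝ)+2)) atTop (𝓝 0) :=
        Tendsto.div_atTop tendsto_const_nhds h1
      have h3 : Tendsto (fun n : ℕ => t₀ - t₀/((n:ℝ)+2)) atTop (𝓝 (t₀ - 0)) :=
        Tendsto.sub tendsto_const_nhds h2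
      simpa using h3
    refine hclosed.mem_of_tendsto hseq (Eventually.of_forall fun n => ?_)
    have hn2 : (0:ℝ) < (n:ℝ) + 2 := by positivity
    have hfrac : 0 < t₀/((n:ℝ)+2) := div_pos ht₀pos hn2
    have hfrac2 : t₀/((n:ℝ)+2) ≤ t₀ := by
      rw [div_le_iff₀ hn2]
      nlinarith
    refine hKbelow _ ⟨by linarith, by linarith⟩
  have hp0 := hpointed _ hpt₀K ht₀B.2
  have hveq : v = (t₀⁻¹ * (1 - t₀)) • x := by
    have h1 : (1 - t₀) • x = t₀ • v := by
      have : (1 - t₀) • x - t₀ • v = 0 := hp0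
      linear_combination (norm := module) this
    rw [mul_smul, h1, inv_smul_smul₀ ht₀0]
  exact hvx (hveq ▸ Submodule.smul_mem _ _ (Submodule.mem_span_singleton_self x))


lemma cone_convex {K : Set V} (hadd : ∀ x ∈ K, ∀ y ∈ K, x + y ∈ K)
    (hsmul : ∀ c : ℝ, 0 ≤ c → ∀ x ∈ K, c • x ∈ K) : Convex ℝ K := by
  intro a ha b hb s t hs ht _
  exact hadd _ (hsmul s hs a ha) _ (hsmul t ht b hb)

lemma exists_support {K : Set V} (hclosed : IsClosed K)
    (hconv : Convex ℝ K) (h0K : (0:V) ∈ K)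
    (hsmul : ∀ c : ℝ, 0 ≤ c → ∀ x ∈ K, c • x ∈ K)
    (z : V) (hz : z ∈ K) (p : ℕ → V)
    (hpW : ∀ n, p n ∈ Submodule.span ℝ K) (hpK : ∀ n, p n ∉ K)
    (hp : Tendsto p atTop (𝓝 z)) :
    ∃ g : V →L[ℝ] ℝ, (∀ y ∈ K, 0 ≤ g y) ∧ g z = 0 ∧
      ∃ w ∈ Submodule.span ℝ K, g w ≠ 0 := by
  classical
  set W : Submodule ℝ V := Submodule.span ℝ K with hW
  obtain ⟨W', hcompl⟩ := Submodule.exists_isCompl W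
  set πₗ : V →ₗ[ℝ] V := W.subtype ∘ₗ (W.linearProjOfIsCompl W' hcompl) with hπₗ
  set π : V →L[ℝ] V := LinearMap.toContinuousLinearMap πₗ with hπ
  have hπW : ∀ v ∈ W, π v = v := by
    intro v hv
    simp only [hπ, LinearMap.coe_toContinuousLinearMap', hπₗ, LinearMap.comp_apply]
    rw [show v = ((⟨v, hv⟩ : W) : V) from rfl,
      show W.linearProjOfIsCompl W' hcompl = W.projectionOnto W' hcompl from rfl,
      Submodule.projectionOnto_apply_left]
    rfl
  have hπmem : ∀ v, π v ∈ W := fun v => (W.linearProjOfIsCompl W' hcompl v).2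
  have hKW : ∀ y ∈ K, y ∈ W := fun y hy => Submodule.subset_span hy
  -- separating functionals
  have hsep : ∀ n, ∃ h : V →L[ℝ] ℝ, ‖h‖ = 1 ∧ (∀ y ∈ K, h y ≤ 0) ∧ 0 < h (p n) ∧
      (∀ v, h (π v) = h v) := by
    intro n
    obtain ⟨f, u, hfK, hfu⟩ := geometric_hahn_banach_closed_point hconv hclosed (hpK n)
    have hu0 : 0 < u := by simpa using hfK 0 h0K
    have hfle : ∀ y ∈ K, f y ≤ 0 := by
      intro y hy
      by_contra hpos
      push_neg at hpos
      have ht : (0:ℝ) ≤ u / f y := le_of_lt (div_pos hu0 hpos)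
      have := hfK _ (hsmul _ ht y hy)
      rw [map_smul, smul_eq_mul, div_mul_cancel₀ _ (ne_of_gt hpos)] at this
      exact lt_irrefl _ this
    set g : V →L[ℝ] ℝ := f.comp π with hg
    have hgp : 0 < g (p n) := by
      have : g (p n) = f (p n) := by
        simp only [hg, ContinuousLinearMap.comp_apply]
        rw [hπW _ (hpW n)]
      rw [this]; exact hu0.trans hfu
    have hgne : g ≠ 0 := by
      intro h; rw [h] at hgp; simp at hgp
    have hgnorm : ‖g‖ ≠ 0 := by simpa using hgne
    refine ⟨‖g‖⁻¹ • g, ?_, ?_, ?_, ?_⟩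
    · rw [norm_smul ‖g‖⁻¹ g, norm_inv, norm_norm]
      field_simp
    · intro y hy
      have : g y = f y := by
        simp only [hg, ContinuousLinearMap.comp_apply]; rw [hπW _ (hKW y hy)]
      simp only [ContinuousLinearMap.smul_apply, smul_eq_mul, this]
      exact mul_nonpos_of_nonneg_of_nonpos (by positivity) (hfle y hy)
    · simp only [ContinuousLinearMap.smul_apply, smul_eq_mul]
      exact mul_pos (by positivity) hgp
    · intro v
      simp only [ContinuousLinearMap.smul_apply, smul_eq_mul, hg,
        ContinuousLinearMap.comp_apply]
      rw [hπW _ (hπmem v)]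
  choose h hnorm hneg hpos hπinv using hsep
  -- compactness of the dual sphere
  have hsph : IsCompact (Metric.sphere (0 : V →L[ℝ] ℝ) 1) := by
    exact Metric.isCompact_of_isClosed_isBounded Metric.isClosed_sphere Metric.isBounded_sphere
  have hmem : ∀ n, h n ∈ Metric.sphere (0 : V →L[ℝ] ℝ) 1 := by
    intro n; simpa [mem_sphere_iff_norm] using hnorm n
  obtain ⟨g, hgs, φ, hφ, hconv'⟩ := hsph.tendsto_subseq hmem
  have heval : ∀ v : V, Tendsto (fun n => h (φ n) v) atTop (𝓝 (g v)) := by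
    intro v
    have : Continuous fun q : V →L[ℝ] ℝ => q v :=
      (ContinuousLinearMap.apply ℝ ℝ v).continuous
    exact (this.tendsto g).comp hconv'
  have hgK : ∀ y ∈ K, g y ≤ 0 := fun y hy =>
    le_of_tendsto (heval y) (Eventually.of_forall fun n => hneg (φ n) y hy)
  have hpz : Tendsto (fun n => p (φ n)) atTop (𝓝 z) := hp.comp hφ.tendsto_atTop
  have hlb : ∀ n, -‖z - p n‖ ≤ h n z := by
    intro n
    have h1 : h n z - h n (p n) = h n (z - p n) := by rw [map_sub]
    have h2 : -‖z - p n‖ ≤ h n (z - p n) := by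
      have := (h n).le_opNorm (z - p n)
      have habs : |h n (z - p n)| ≤ ‖z - p n‖ := by
        calc |h n (z - p n)| = ‖h n (z - p n)‖ := rfl
        _ ≤ ‖h n‖ * ‖z - p n‖ := (h n).le_opNorm _
        _ = ‖z - p n‖ := by rw [hnorm n, one_mul]
      linarith [neg_abs_le (h n (z - p n))]
    nlinarith [hpos n]
  have hgz : g z = 0 := by
    refine le_antisymm (hgK z hz) ?_
    have hto : Tendsto (fun n => -‖z - p (φ n)‖) atTop (𝓝 0) := by
      have : Tendsto (fun n => z - p (φ n)) atTop (𝓝 (z - z)) :=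
        tendsto_const_nhds.sub hpz
      rw [sub_self] at this
      simpa using (this.norm).neg
    exact le_of_tendsto_of_tendsto hto (heval z)
      (Eventually.of_forall fun n => hlb (φ n))
  have hgW : ∃ w ∈ W, g w ≠ 0 := by
    by_contra hno
    push_neg at hno
    have hg0 : g = 0 := by
      ext v
      have h1 : ∀ n, h (φ n) (π v) = h (φ n) v := fun n => hπinv (φ n) v
      have h2 : g (π v) = g v :=
        tendsto_nhds_unique (by simpa [fun n => h1 n] using heval (π v)) (heval v)
      rw [← h2, hno _ (hπmem v)]
      rfl
    have : ‖g‖ = 1 := by simpa [mem_sphere_iff_norm] using hgs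
    rw [hg0] at this
    simp at this
  obtain ⟨w, hwW, hgw⟩ := hgW
  exact ⟨-g, fun y hy => by simpa using hgK y hy, by simpa using hgz,
    ⟨w, hwW, by simpa using hgw⟩⟩

lemma main_aux : ∀ (n : ℕ) (K : Set V), IsClosed K →
    (∀ x ∈ K, ∀ y ∈ K, x + y ∈ K) →
    (∀ c : ℝ, 0 ≤ c → ∀ x ∈ K, c • x ∈ K) →
    (∀ x, x ∈ K → -x ∈ K → x = 0) →
    Module.finrank ℝ (Submodule.span ℝ K) ≤ n →
    ∀ x ∈ K, ∃ (k : ℕ) (c : Fin k → ℝ) (y : Fin k → V),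
      (∀ i, 0 ≤ c i) ∧ (∀ i, GeneratesExtremeRay K (y i)) ∧ x = ∑ i, c i • y i := by
  intro n
  induction n with
  | zero =>
    intro K hclosed hadd hsmul hpointed hrank x hx
    have hbot : Submodule.span ℝ K = ⊥ :=
      Submodule.finrank_eq_zero.mp (Nat.le_zero.mp hrank)
    have hx0 : x = 0 := by
      have h1 : x ∈ (⊥ : Submodule ℝ V) := hbot ▸ Submodule.subset_span (R := ℝ) hx
      simpa using h1
    exact ⟨0, Fin.elim0, Fin.elim0, (fun i => i.elim0), (fun i => i.elim0),
      by simp [hx0]⟩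
  | succ n IH =>
    intro K hclosed hadd hsmul hpointed hrank x hx
    classical
    have h0K : (0:V) ∈ K := by simpa using hsmul 0 le_rfl x hx
    by_cases hx0 : x = 0
    · exact ⟨0, Fin.elim0, Fin.elim0, (fun i => i.elim0), (fun i => i.elim0),
        by simp [hx0]⟩
    set W : Submodule ℝ V := Submodule.span ℝ K with hWdef
    have hKW : ∀ y ∈ K, y ∈ W := fun y hy => Submodule.subset_span hy
    -- face step: decompose any z ∈ K approximable from W \ K
    have faceStep : ∀ z ∈ K, ∀ p : ℕ → V, (∀ m, p m ∈ W) → (∀ m, p m ∉ K) →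
        Tendsto p atTop (𝓝 z) →
        ∃ (k : ℕ) (c : Fin k → ℝ) (y : Fin k → V),
          (∀ i, 0 ≤ c i) ∧ (∀ i, GeneratesExtremeRay K (y i)) ∧ z = ∑ i, c i • y i := by
      intro z hz p hpW hpK hp
      obtain ⟨g, hg, hgz, w₀, hw₀W, hgw₀⟩ :=
        exists_support hclosed (cone_convex hadd hsmul) h0K hsmul z hz p hpW hpK hp
      set F : Set V := {a | a ∈ K ∧ g a = 0} with hFdef
      have hFsub : F ⊆ K := fun a ha => ha.1
      have hFclosed : IsClosed F :=
        hclosed.inter (isClosed_eq g.continuous continuous_const)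
      have hFadd : ∀ a ∈ F, ∀ b ∈ F, a + b ∈ F := by
        rintro a ⟨haK, hag⟩ b ⟨hbK, hbg⟩
        exact ⟨hadd a haK b hbK, by rw [map_add, hag, hbg, add_zero]⟩
      have hFsmul : ∀ c : ℝ, 0 ≤ c → ∀ a ∈ F, c • a ∈ F := by
        rintro c hc a ⟨haK, hag⟩
        exact ⟨hsmul c hc a haK, by rw [map_smul, hag, smul_zero]⟩
      have hFpointed : ∀ a, a ∈ F → -a ∈ F → a = 0 := fun a ha hb =>
        hpointed a ha.1 hb.1
      have hrankF : Module.finrank ℝ (Submodule.span ℝ F) ≤ n := by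
        have h1 : Submodule.span ℝ F ≤ W ⊓ LinearMap.ker (g : V →ₗ[ℝ] ℝ) := by
          rw [Submodule.span_le]
          rintro a ⟨haK, hag⟩
          exact ⟨hKW a haK, hag⟩
        have h2 : W ⊓ LinearMap.ker (g : V →ₗ[ℝ] ℝ) < W := by
          refine lt_of_le_of_ne inf_le_left (fun h => hgw₀ ?_)
          have : w₀ ∈ W ⊓ LinearMap.ker (g : V →ₗ[ℝ] ℝ) := h.symm ▸ hw₀W
          exact this.2
        have h3 : Module.finrank ℝ (Submodule.span ℝ F) <
            Module.finrank ℝ W :=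
          lt_of_le_of_lt (Submodule.finrank_mono h1)
            (Submodule.finrank_lt_finrank_of_lt h2)
        omega
      obtain ⟨k, c, y, hc, hy, he⟩ := IH F hFclosed hFadd hFsmul hFpointed hrankF
        z ⟨hz, hgz⟩
      exact ⟨k, c, y, hc, fun i => face_extreme hsmul g hg (y i) (hy i), he⟩
    by_cases hri : ∃ ε > 0, ∀ y ∈ (W : Set V), dist y x < ε → y ∈ K
    · -- relative interior case
      by_cases hKx : K ⊆ (Submodule.span ℝ {x} : Set V)
      · -- K is contained in the ray of x
        have hray : K ⊆ RayOf x := by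
          intro a haK
          obtain ⟨t, ht⟩ := Submodule.mem_span_singleton.mp (hKx haK)
          rcases le_or_gt 0 t with h | h
          · exact ⟨t, h, ht.symm⟩
          · exfalso
            have hnegA : -a ∈ K := by
              have : -a = (-t) • x := by rw [← ht, neg_smul]
              rw [this]
              exact hsmul (-t) (by linarith) x hx
            have := hpointed a haK hnegA
            rw [this] at ht
            have : t = 0 ∨ x = 0 := smul_eq_zero.mp ht
            rcases this with h' | h'
            · exact absurd h' (ne_of_lt h)
            · exact hx0 h'
        refine ⟨1, (fun _ => 1), (fun _ => x), (fun _ => zero_le_one), ?_, by simp⟩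
        intro i
        refine ⟨hx, ?_⟩
        rintro x' hx' a ha b hb rfl
        exact ⟨hray ha, hray hb⟩
      · -- find the two-sided-outside direction
        obtain ⟨v, hvK, hvx⟩ := Set.not_subset.mp hKx
        obtain ⟨w, hwW, hwK, hwnK⟩ :=
          exists_two_sided_outside hclosed hsmul hpointed hx hvK hx0 hvx
        have hw0 : w ≠ 0 := fun h => hwK (h ▸ h0K)
        set I : Set ℝ := {t : ℝ | x + t • w ∈ K} with hIdef
        have hIclosed : IsClosed I := by
          have : Continuous fun t : ℝ => x + t • w := by fun_prop
          exact hclosed.preimage this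
        have hI0 : (0:ℝ) ∈ I := by simpa [hIdef] using hx
        have hIbddAbove : BddAbove I := by
          by_contra hnb
          rw [not_bddAbove_iff] at hnb
          have hsel : ∀ m : ℕ, ∃ t ∈ I, (m:ℝ) < t := fun m => hnb m
          choose t htI htm using hsel
          have htpos : ∀ m, 0 < t m := fun m =>
            lt_of_le_of_lt (Nat.cast_nonneg m) (htm m)
          have htop : Tendsto t atTop atTop :=
            tendsto_atTop_mono (fun m => (htm m).le) tendsto_natCast_atTop_atTop
          have hinv : Tendsto (fun m => (t m)⁻¹) atTop (𝓝 0) :=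
            tendsto_inv_atTop_zero.comp htop
          have humem : ∀ m, (t m)⁻¹ • (x + t m • w) ∈ K := fun m =>
            hsmul _ (inv_nonneg.mpr (htpos m).le) _ (htI m)
          have hueq : ∀ m, (t m)⁻¹ • (x + t m • w) = (t m)⁻¹ • x + w := by
            intro m
            rw [smul_add, smul_smul, inv_mul_cancel₀ (htpos m).ne', one_smul]
          have hulim : Tendsto (fun m => (t m)⁻¹ • x + w) atTop (𝓝 w) := by
            have h1 : Tendsto (fun m => (t m)⁻¹ • x) atTop (𝓝 ((0:ℝ) • x)) :=
              hinv.smul_const x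
            rw [zero_smul] at h1
            simpa using h1.add_const w
          exact hwK (hclosed.mem_of_tendsto
            (by simpa only [fun m => (hueq m).symm] using hulim)
            (Eventually.of_forall humem))
        have hIbddBelow : BddBelow I := by
          by_contra hnb
          rw [not_bddBelow_iff] at hnb
          have hsel : ∀ m : ℕ, ∃ t ∈ I, t < -(m:ℝ) := fun m => hnb (-(m:ℝ))
          choose t htI htm using hsel
          have htneg : ∀ m, t m < 0 := fun m =>
            lt_of_lt_of_le (htm m) (by simpa using Nat.cast_nonneg (α := ℝ) m)
          have htop : Tendsto (fun m => -(t m)) atTop atTop := by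
            apply tendsto_atTop_mono (fun m => ?_) tendsto_natCast_atTop_atTop
            linarith [htm m]
          have hinv : Tendsto (fun m => (-(t m))⁻¹) atTop (𝓝 0) :=
            tendsto_inv_atTop_zero.comp htop
          have humem : ∀ m, (-(t m))⁻¹ • (x + t m • w) ∈ K := fun m =>
            hsmul _ (inv_nonneg.mpr (by linarith [htneg m])) _ (htI m)
          have hueq : ∀ m, (-(t m))⁻¹ • (x + t m • w) = (-(t m))⁻¹ • x + (-w) := by
            intro m
            rw [smul_add, smul_smul]
            congr 1
            rw [show (-(t m))⁻¹ * t m = -1 by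
              rw [inv_neg, neg_mul, inv_mul_cancel₀ (ne_of_lt (htneg m))]]
            rw [neg_one_smul]
          have hulim : Tendsto (fun m => (-(t m))⁻¹ • x + (-w)) atTop (𝓝 (-w)) := by
            have h1 : Tendsto (fun m => (-(t m))⁻¹ • x) atTop (𝓝 ((0:ℝ) • x)) :=
              hinv.smul_const x
            rw [zero_smul] at h1
            simpa using h1.add_const (-w)
          exact hwnK (hclosed.mem_of_tendsto
            (by simpa only [fun m => (hueq m).symm] using hulim)
            (Eventually.of_forall humem))
        have hIne : I.Nonempty := ⟨0, hI0⟩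
        set tp : ℝ := sSup I with htp
        set tm : ℝ := sInf I with htm
        have htpI : tp ∈ I := hIclosed.csSup_mem hIne hIbddAbove
        have htmI : tm ∈ I := hIclosed.csInf_mem hIne hIbddBelow
        -- nondegeneracy from relative interior
        obtain ⟨ε, hε, hεK⟩ := hri
        set δ : ℝ := ε / (2 * (‖w‖ + 1)) with hδ
        have hδpos : 0 < δ := by positivity
        have hδI : ∀ s : ℝ, |s| ≤ δ → s ∈ I := by
          intro s hs
          apply hεK
          · exact Submodule.add_mem _ (hKW x hx) (Submodule.smul_mem _ _ hwW)
          · rw [dist_eq_norm]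
            have : x + s • w - x = s • w := by abel
            rw [this, norm_smul]
            have h1 : |s| * ‖w‖ ≤ δ * ‖w‖ :=
              mul_le_mul_of_nonneg_right hs (norm_nonneg w)
            have h2 : δ * ‖w‖ < ε := by
              rw [hδ]
              rw [div_mul_eq_mul_div, div_lt_iff₀ (by positivity)]
              nlinarith [norm_nonneg w]
            calc ‖s‖ * ‖w‖ = |s| * ‖w‖ := rfl
            _ ≤ δ * ‖w‖ := h1
            _ < ε := h2
        have htppos : 0 < tp := lt_of_lt_of_le hδpos
          (le_csSup hIbddAbove (hδI δ (by rw [abs_of_pos hδpos])))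
        have htmneg : tm < 0 := lt_of_le_of_lt
          (csInf_le hIbddBelow (hδI (-δ) (by rw [abs_neg, abs_of_pos hδpos]))) 
          (by linarith)
        -- boundary points
        have hbd : ∀ (t₀ sgn : ℝ), x + t₀ • w ∈ K →
            (∀ m : ℕ, x + (t₀ + sgn / ((m:ℝ)+1)) • w ∉ K) →
            ∃ (k : ℕ) (c : Fin k → ℝ) (y : Fin k → V),
              (∀ i, 0 ≤ c i) ∧ (∀ i, GeneratesExtremeRay K (y i)) ∧
              x + t₀ • w = ∑ i, c i • y i := by
          intro t₀ sgn ht₀I hout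
          have hinW : ∀ m : ℕ, x + (t₀ + sgn / ((m:ℝ)+1)) • w ∈ W := fun m =>
            Submodule.add_mem _ (hKW x hx) (Submodule.smul_mem _ _ hwW)
          have hlim : Tendsto (fun m : ℕ => x + (t₀ + sgn / ((m:ℝ)+1)) • w) atTop
              (𝓝 (x + t₀ • w)) := by
            have hden : Tendsto (fun m : ℕ => ((m:ℝ)+1)) atTop atTop :=
              tendsto_atTop_add_const_right _ 1 tendsto_natCast_atTop_atTop
            have h1 : Tendsto (fun m : ℕ => sgn / ((m:ℝ)+1)) atTop (𝓝 0) :=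
              Tendsto.div_atTop tendsto_const_nhds hden
            have h2 : Tendsto (fun m : ℕ => t₀ + sgn / ((m:ℝ)+1)) atTop (𝓝 (t₀ + 0)) :=
              tendsto_const_nhds.add h1
            rw [add_zero] at h2
            exact tendsto_const_nhds.add (h2.smul_const w)
          exact faceStep _ ht₀I _ hinW hout hlim
        have hdp := hbd tp 1 htpI (fun m hmem => by
          have h1 : tp + 1/((m:ℝ)+1) ≤ tp := le_csSup hIbddAbove hmem
          have h2 : (0:ℝ) < 1/((m:ℝ)+1) := by positivity
          linarith)
        have hdm := hbd tm (-1) htmI (fun m hmem => by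
          have h1 : tm ≤ tm + (-1)/((m:ℝ)+1) := csInf_le hIbddBelow hmem
          have h2 : (0:ℝ) < 1/((m:ℝ)+1) := by positivity
          rw [neg_div] at h1
          linarith)
        -- x as a nonnegative combination of the two boundary points
        have hcomb : x = (tp / (tp - tm)) • (x + tm • w)
            + (-tm / (tp - tm)) • (x + tp • w) := by
          have hne : tp - tm ≠ 0 := by intro h; rw [sub_eq_zero] at h; linarith
          match_scalars <;> field_simp <;> ring
        have hd : (0:ℝ) < tp - tm := by linarith
        exact combine_decomp (div_nonneg htppos.le hd.le)
          (div_nonneg (by linarith) hd.le) hcomb hdm hdp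
    · -- relative boundary case
      push_neg at hri
      have hsel : ∀ m : ℕ, ∃ y, y ∈ (W : Set V) ∧ dist y x < 1/((m:ℝ)+1) ∧ y ∉ K := by
        intro m
        obtain ⟨y, hyW, hyd, hyK⟩ := hri (1/((m:ℝ)+1)) (by positivity)
        exact ⟨y, hyW, hyd, hyK⟩
      choose p hpW hpd hpK using hsel
      have hp : Tendsto p atTop (𝓝 x) := by
        rw [tendsto_iff_dist_tendsto_zero]
        have hden : Tendsto (fun m : ℕ => ((m:ℝ)+1)) atTop atTop :=
          tendsto_atTop_add_const_right _ 1 tendsto_natCast_atTop_atTop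
        have h1 : Tendsto (fun m : ℕ => 1 / ((m:ℝ)+1)) atTop (𝓝 0) :=
          Tendsto.div_atTop tendsto_const_nhds hden
        exact squeeze_zero (fun m => dist_nonneg) (fun m => (hpd m).le) h1
      exact faceStep x hx p hpW hpK hp

end Helpers

/-- In a finite-dimensional real normed space, every element of a closed,
pointed convex cone is a finite nonnegative combination of elements lying on extreme
rays of the cone. -/
theorem mem_cone_eq_combination_of_extreme_rays
    {V : Type*} [NormedAddCommGroup V] [NormedSpace ℝ V] [FiniteDimensional ℝ V]
    (K : Set V) (hclosed : IsClosed K)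
    (hadd : ∀ x ∈ K, ∀ y ∈ K, x + y ∈ K)
    (hsmul : ∀ c : ℝ, 0 ≤ c → ∀ x ∈ K, c • x ∈ K)
    (hpointed : ∀ x, x ∈ K → -x ∈ K → x = 0)
    (x : V) (hx : x ∈ K) :
    ∃ (k : ℕ) (c : Fin k → ℝ) (y : Fin k → V),
      (∀ i, 0 ≤ c i) ∧ (∀ i, GeneratesExtremeRay K (y i)) ∧
      x = ∑ i, c i • y i := by
  exact main_aux (Module.finrank ℝ ↥(Submodule.span ℝ K)) K hclosed hadd hsmul
    hpointed le_rfl x hx
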